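/- Let α ∈ (0,1) and let X be an infinite-dimensional real Banach space. Then there exist u₀ ∈ X, a continuous and locally Lipschitz function f : [0,∞) × X → X which does not map every bounded subset of [0,∞) × X into a bounded subset of X, and a bounded continuous function u : [0,1) → X with u(0) = u₀ satisfying u(t) = u₀ + (1/Γ(α)) ∫_0^t (t−s)^{α−1} f(s, u(s)) ds for every t ∈ [0,1), such that u admits no continuous extension to [0,1]. In particular, u is a bounded maximal local solution of the fractional Cauchy problem cD^α u(t) = f(t, u(t)), u(0) = u₀, defined exactly on [0,1). -/

import Mathlib

open Set MeasureTheory Filter intervalIntegral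

namespace AbsBlow

noncomputable section

def pos (x : ℝ) : ℝ := max x 0
def aa (n : ℕ) : ℝ := 1 - (2⁻¹:ℝ)^n
def sig (n : ℕ) : ℝ := (2:ℝ)^(n+3)
def c1 (n : ℕ) : ℝ := aa n
def c2 (n : ℕ) : ℝ := aa n + (2⁻¹:ℝ)^(n+3)
def c3 (n : ℕ) : ℝ := aa (n+1) + (2⁻¹:ℝ)^(n+4)
def c4 (n : ℕ) : ℝ := aa (n+1) + (2⁻¹:ℝ)^(n+3)
def w (n : ℕ) (t : ℝ) : ℝ :=
  sig n * (pos (t - c1 n) - pos (t - c2 n)) - sig (n+1) * (pos (t - c3 n) - pos (t - c4 n))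

lemma qpos (k : ℕ) : (0:ℝ) < (2⁻¹:ℝ)^k := by positivity

lemma qmono {m n : ℕ} (h : m ≤ n) : (2⁻¹:ℝ)^n ≤ (2⁻¹:ℝ)^m :=
  pow_le_pow_of_le_one (by norm_num) (by norm_num) h

lemma qmono_lt {m n : ℕ} (h : m < n) : (2⁻¹:ℝ)^n < (2⁻¹:ℝ)^m :=
  pow_lt_pow_right_of_lt_one₀ (by norm_num) (by norm_num) h

lemma aa_mono {m n : ℕ} (h : m ≤ n) : aa m ≤ aa n := by
  unfold aa; linarith [qmono h]

lemma aa_lt {m n : ℕ} (h : m < n) : aa m < aa n := by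
  unfold aa; linarith [qmono_lt h]

lemma aa_nonneg (n : ℕ) : 0 ≤ aa n := by
  unfold aa; have := qmono (Nat.zero_le n); simp at this ⊢; linarith

lemma aa_lt_one (n : ℕ) : aa n < 1 := by
  unfold aa; have := qpos n; linarith

lemma aa_zero : aa 0 = 0 := by unfold aa; norm_num

lemma aa_succ (n : ℕ) : aa (n+1) = aa n + (2⁻¹:ℝ)^(n+1) := by
  unfold aa; rw [pow_succ]; ring

lemma sig_mul (n : ℕ) : sig n * (2⁻¹:ℝ)^(n+3) = 1 := by
  unfold sig; rw [inv_pow, mul_inv_cancel₀]; positivity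

lemma sig_pos (n : ℕ) : 0 < sig n := by unfold sig; positivity

lemma c1_lt_c2 (n : ℕ) : c1 n < c2 n := by unfold c1 c2; have := qpos (n+3); linarith
lemma c2_le_a1 (n : ℕ) : c2 n ≤ aa (n+1) := by
  unfold c2; rw [aa_succ]; have := qmono (show n+1 ≤ n+3 by omega); linarith
lemma a1_lt_c3 (n : ℕ) : aa (n+1) < c3 n := by unfold c3; have := qpos (n+4); linarith
lemma c3_lt_c4 (n : ℕ) : c3 n < c4 n := by
  unfold c3 c4; have := qmono_lt (show n+3 < n+4 by omega); linarith
lemma c4_le_a2 (n : ℕ) : c4 n ≤ aa (n+2) := by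
  unfold c4; rw [show n+2 = (n+1)+1 by rfl, aa_succ (n+1)]
  have := qmono (show n+2 ≤ n+3 by omega); linarith
lemma c3_eq (n : ℕ) : c3 n = c2 (n+1) := rfl
lemma c2_sub_c1 (n : ℕ) : c2 n - c1 n = (2⁻¹:ℝ)^(n+3) := by unfold c1 c2; ring
lemma c4_sub_c3 (n : ℕ) : c4 n - c3 n = (2⁻¹:ℝ)^(n+4) := by
  unfold c3 c4; have : (2⁻¹:ℝ)^(n+4) = (2⁻¹:ℝ)^(n+3) * 2⁻¹ := by rw [pow_succ]
  rw [this]; ring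
lemma sig_mul' (n : ℕ) : sig (n+1) * (c4 n - c3 n) = 1 := by
  rw [c4_sub_c3]
  have := sig_mul (n+1); rw [show (n+1)+3 = n+4 by omega] at this; exact this

-- pos facts
lemma pos_of_nonpos {x : ℝ} (h : x ≤ 0) : pos x = 0 := max_eq_right h
lemma pos_of_nonneg {x : ℝ} (h : 0 ≤ x) : pos x = x := max_eq_left h
lemma pos_nonneg (x : ℝ) : 0 ≤ pos x := le_max_right _ _
lemma pos_sub_bounds {x d : ℝ} (hd : 0 ≤ d) : 0 ≤ pos x - pos (x - d) ∧ pos x - pos (x - d) ≤ d := by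
  unfold pos
  rcases le_total x 0 with h | h
  · rw [max_eq_right h, max_eq_right (by linarith)]; norm_num [hd]
  · rcases le_total (x - d) 0 with h' | h'
    · rw [max_eq_left h, max_eq_right h']; constructor <;> linarith
    · rw [max_eq_left h, max_eq_left h']; constructor <;> linarith

lemma w_zero_left {n : ℕ} {t : ℝ} (h : t ≤ aa n) : w n t = 0 := by
  unfold w
  have h1 : pos (t - c1 n) = 0 := pos_of_nonpos (by unfold c1; linarith)
  have h2 : pos (t - c2 n) = 0 := pos_of_nonpos (by have := c1_lt_c2 n; unfold c1 at this; linarith)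
  have h3 : pos (t - c3 n) = 0 := pos_of_nonpos (by
    have := a1_lt_c3 n; have := aa_lt (show n < n+1 by omega); linarith)
  have h4 : pos (t - c4 n) = 0 := pos_of_nonpos (by
    have := c3_lt_c4 n; have := a1_lt_c3 n; have := aa_lt (show n < n+1 by omega); linarith)
  rw [h1, h2, h3, h4]; ring

lemma w_zero_right {n : ℕ} {t : ℝ} (h : c4 n ≤ t) : w n t = 0 := by
  unfold w
  have o1 := c1_lt_c2 n; have o2 := c2_le_a1 n; have o3 := a1_lt_c3 n; have o4 := c3_lt_c4 n
  rw [pos_of_nonneg (by linarith), pos_of_nonneg (by linarith),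
    pos_of_nonneg (by linarith), pos_of_nonneg (by linarith)]
  have e1 : sig n * ((t - c1 n) - (t - c2 n)) = 1 := by
    rw [show (t - c1 n) - (t - c2 n) = c2 n - c1 n by ring, c2_sub_c1]; exact sig_mul n
  have e2 : sig (n+1) * ((t - c3 n) - (t - c4 n)) = 1 := by
    rw [show (t - c3 n) - (t - c4 n) = c4 n - c3 n by ring]; exact sig_mul' n
  linarith

lemma w_one {n : ℕ} {t : ℝ} (h1 : c2 n ≤ t) (h2 : t ≤ c3 n) : w n t = 1 := by
  unfold w
  have o1 := c1_lt_c2 n; have o3 := c3_lt_c4 n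
  rw [pos_of_nonneg (by linarith), pos_of_nonneg (by linarith),
    pos_of_nonpos (by linarith), pos_of_nonpos (by linarith)]
  have : sig n * ((t - c1 n) - (t - c2 n)) = 1 := by
    rw [show (t - c1 n) - (t - c2 n) = c2 n - c1 n by ring, c2_sub_c1]; exact sig_mul n
  linarith [this]

lemma w_bounds (n : ℕ) (t : ℝ) : 0 ≤ w n t ∧ w n t ≤ 1 := by
  unfold w
  rcases le_total t (c3 n) with h | h
  · have h3 : pos (t - c3 n) = 0 := pos_of_nonpos (by linarith)
    have h4 : pos (t - c4 n) = 0 := pos_of_nonpos (by have := c3_lt_c4 n; linarith)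
    rw [h3, h4]
    have hb := pos_sub_bounds (x := t - c1 n) (d := c2 n - c1 n) (le_of_lt (by linarith [c1_lt_c2 n]))
    rw [show t - c1 n - (c2 n - c1 n) = t - c2 n by ring] at hb
    have := sig_pos n
    constructor
    · nlinarith [hb.1]
    · nlinarith [hb.2, sig_mul n, c2_sub_c1 n]
  · have o1 := c1_lt_c2 n; have o2 := c2_le_a1 n; have o3 := a1_lt_c3 n
    rw [pos_of_nonneg (by linarith), pos_of_nonneg (by linarith)]
    have e1 : sig n * ((t - c1 n) - (t - c2 n)) = 1 := by
      rw [show (t - c1 n) - (t - c2 n) = c2 n - c1 n by ring, c2_sub_c1]; exact sig_mul n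
    have hb := pos_sub_bounds (x := t - c3 n) (d := c4 n - c3 n) (le_of_lt (by linarith [c3_lt_c4 n]))
    rw [show t - c3 n - (c4 n - c3 n) = t - c4 n by ring] at hb
    have hs : sig (n+1) * (c4 n - c3 n) = 1 := by
      rw [c4_sub_c3]
      have := sig_mul (n+1); rw [show (n+1)+3 = n+4 by omega] at this; exact this
    have := sig_pos (n+1)
    constructor
    · nlinarith [hb.2]
    · nlinarith [hb.1]

lemma w_cont (n : ℕ) : Continuous (w n) := by
  unfold w pos
  fun_prop


variable {α : ℝ}


def atom (α : ℝ) (x : ℝ) : ℝ := (pos x) ^ (1 - α)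
def Bal (α : ℝ) : ℝ := ∫ x in (0:ℝ)..1, x ^ (1-α) * (1-x) ^ (α-1)

lemma atom_cont (hα1 : α < 1) (c : ℝ) : Continuous (fun x : ℝ => atom α (x - c)) := by
  apply Continuous.rpow_const
  · exact (continuous_id.sub continuous_const).max continuous_const
  · intro x; right; linarith

lemma atom_of_nonpos {x : ℝ} (hα1 : α < 1) (h : x ≤ 0) : atom α x = 0 := by
  rw [atom, pos_of_nonpos h, Real.zero_rpow (by linarith)]

lemma kint (hα0 : 0 < α) (t a b : ℝ) :
    IntervalIntegrable (fun r => (t-r)^(α-1)) volume a b := by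
  have h := intervalIntegrable_rpow' (a := t - a) (b := t - b) (r := α - 1) (by linarith)
  simpa using h.comp_sub_left t

lemma katom (hα0 : 0 < α) (hα1 : α < 1) (t c a b : ℝ) :
    IntervalIntegrable (fun r => (t-r)^(α-1) * atom α (r - c)) volume a b :=
  (kint hα0 t a b).mul_continuousOn ((atom_cont hα1 c).continuousOn)

lemma balInt (hα0 : 0 < α) (hα1 : α < 1) :
    IntervalIntegrable (fun x => x^(1-α) * (1-x)^(α-1)) volume 0 1 := by
  have h1 : IntervalIntegrable (fun r : ℝ => (1-r)^(α-1)) volume 0 1 := kint hα0 1 0 1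
  exact h1.continuousOn_mul (Continuous.continuousOn (by
    apply Continuous.rpow_const continuous_id
    intro x; right; linarith))

lemma balPos (hα0 : 0 < α) (hα1 : α < 1) : 0 < Bal α := by
  apply intervalIntegral_pos_of_pos_on (balInt hα0 hα1) _ one_pos
  intro x hx
  have h1 : (0:ℝ) < x ^ (1-α) := Real.rpow_pos_of_pos hx.1 _
  have h2 : (0:ℝ) < (1-x) ^ (α-1) := Real.rpow_pos_of_pos (by linarith [hx.2]) _
  positivity

lemma betaL (hα0 : 0 < α) (hα1 : α < 1) {c t : ℝ} (h : c < t) :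
    ∫ s in c..t, (t-s)^(α-1) * (s-c)^(1-α) = (t - c) * Bal α := by
  set T := t - c with hTdef
  have hT : 0 < T := by simp [hTdef]; linarith
  have h1 : ∫ s in c..t, (t-s)^(α-1) * (s-c)^(1-α)
      = ∫ y in (0:ℝ)..T, (T-y)^(α-1) * y^(1-α) := by
    have := intervalIntegral.integral_comp_add_right
      (a := (0:ℝ)) (b := T) (fun s => (t-s)^(α-1) * (s-c)^(1-α)) c
    rw [zero_add] at this
    rw [show T + c = t by simp [hTdef]] at this
    rw [← this]
    apply intervalIntegral.integral_congr
    intro y _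
    dsimp only
    have e1 : t - (y + c) = T - y := by simp [hTdef]; ring
    have e2 : y + c - c = y := by ring
    rw [e1, e2]
  have h2 : ∫ x in (0:ℝ)..1, (fun y => (T-y)^(α-1) * y^(1-α)) (T * x)
      = T⁻¹ • ∫ y in (0:ℝ)..T, (T-y)^(α-1) * y^(1-α) := by
    have := intervalIntegral.integral_comp_mul_left
      (a := (0:ℝ)) (b := 1) (fun y => (T-y)^(α-1) * y^(1-α)) (ne_of_gt hT)
    rw [mul_zero, mul_one] at this
    exact this
  have h3 : ∫ x in (0:ℝ)..1, (fun y => (T-y)^(α-1) * y^(1-α)) (T * x) = Bal α := by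
    rw [Bal]
    apply intervalIntegral.integral_congr
    intro x hx
    rw [uIcc_of_le (by norm_num : (0:ℝ) ≤ 1)] at hx
    obtain ⟨hx0, hx1⟩ := hx
    dsimp only
    have e1 : T - T * x = T * (1 - x) := by ring
    rw [e1, Real.mul_rpow (le_of_lt hT) (by linarith), Real.mul_rpow (le_of_lt hT) hx0]
    have e2 : T ^ (α-1) * T ^ (1-α) = 1 := by
      rw [← Real.rpow_add hT]
      norm_num
    calc T ^ (α-1) * (1-x) ^ (α-1) * (T ^ (1-α) * x ^ (1-α))
        = (T ^ (α-1) * T ^ (1-α)) * ((1-x) ^ (α-1) * x ^ (1-α)) := by ring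
      _ = x ^ (1-α) * (1-x) ^ (α-1) := by rw [e2]; ring
  rw [h1]
  rw [h3] at h2
  have := h2.symm
  rw [smul_eq_mul] at this
  field_simp at this
  linarith [this]

lemma ilem (hα0 : 0 < α) (hα1 : α < 1) {c t : ℝ} (hc : 0 ≤ c) (ht : 0 ≤ t) :
    ∫ r in (0:ℝ)..t, (t-r)^(α-1) * atom α (r - c) = Bal α * pos (t - c) := by
  rcases le_or_gt t c with h | h
  · rw [pos_of_nonpos (by linarith)]
    rw [intervalIntegral.integral_congr (g := fun _ => (0:ℝ))]
    · simp
    · intro r hr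
      rw [uIcc_of_le ht] at hr
      dsimp only
      rw [atom_of_nonpos hα1 (by linarith [hr.2] : r - c ≤ 0), mul_zero]
  · have hi1 := katom hα0 hα1 t c 0 c
    have hi2 := katom hα0 hα1 t c c t
    rw [← intervalIntegral.integral_add_adjacent_intervals hi1 hi2]
    have z1 : ∫ r in (0:ℝ)..c, (t-r)^(α-1) * atom α (r - c) = 0 := by
      rw [intervalIntegral.integral_congr (g := fun _ => (0:ℝ))]
      · simp
      · intro r hr
        rw [uIcc_of_le hc] at hr
        dsimp only
        rw [atom_of_nonpos hα1 (by linarith [hr.2] : r - c ≤ 0), mul_zero]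
    have z2 : ∫ r in c..t, (t-r)^(α-1) * atom α (r - c)
        = ∫ r in c..t, (t-r)^(α-1) * (r-c)^(1-α) := by
      apply intervalIntegral.integral_congr
      intro r hr
      rw [uIcc_of_le (le_of_lt h)] at hr
      dsimp only
      rw [show atom α (r - c) = (r - c)^(1-α) by
        rw [atom, pos_of_nonneg (by linarith [hr.1])]]
    rw [z1, z2, betaL hα0 hα1 h, pos_of_nonneg (by linarith), zero_add, mul_comm]


def Kal (α : ℝ) : ℝ := Real.Gamma α / Bal α

def gf (α : ℝ) (n : ℕ) (s : ℝ) : ℝ :=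
  Kal α * (sig n * (atom α (s - c1 n) - atom α (s - c2 n))
    - sig (n+1) * (atom α (s - c3 n) - atom α (s - c4 n)))

lemma kal_pos (hα0 : 0 < α) (hα1 : α < 1) : 0 < Kal α :=
  div_pos (Real.Gamma_pos_of_pos hα0) (balPos hα0 hα1)

lemma gf_cont (hα1 : α < 1) (n : ℕ) : Continuous (gf α n) := by
  unfold gf
  exact continuous_const.mul ((continuous_const.mul ((atom_cont hα1 _).sub (atom_cont hα1 _))).sub
    (continuous_const.mul ((atom_cont hα1 _).sub (atom_cont hα1 _))))

lemma gf_zero_left (hα1 : α < 1) {n : ℕ} {s : ℝ} (h : s ≤ aa n) : gf α n s = 0 := by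
  have o1 := c1_lt_c2 n; have o2 := c2_le_a1 n; have o3 := a1_lt_c3 n; have o4 := c3_lt_c4 n
  have ha := aa_lt (show n < n+1 by omega)
  unfold gf
  rw [atom_of_nonpos hα1 (by unfold c1; linarith), atom_of_nonpos hα1 (by unfold c1 at o1; linarith),
    atom_of_nonpos hα1 (by linarith), atom_of_nonpos hα1 (by linarith)]
  ring

lemma kgf (hα0 : 0 < α) (hα1 : α < 1) (n : ℕ) (t a b : ℝ) :
    IntervalIntegrable (fun r => (t-r)^(α-1) * gf α n r) volume a b :=
  (kint hα0 t a b).mul_continuousOn ((gf_cont hα1 n).continuousOn)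

lemma knot_nonneg (n : ℕ) : 0 ≤ c1 n ∧ 0 ≤ c2 n ∧ 0 ≤ c3 n ∧ 0 ≤ c4 n := by
  have h1 := aa_nonneg n; have h2 := aa_nonneg (n+1)
  have o1 := c1_lt_c2 n; have o3 := a1_lt_c3 n; have o4 := c3_lt_c4 n
  refine ⟨by unfold c1; linarith, by unfold c1 at o1; linarith, by linarith, by linarith⟩

lemma gf_int (hα0 : 0 < α) (hα1 : α < 1) (n : ℕ) {t : ℝ} (ht : 0 ≤ t) :
    ∫ r in (0:ℝ)..t, (t-r)^(α-1) * gf α n r = Real.Gamma α * w n t := by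
  obtain ⟨k1, k2, k3, k4⟩ := knot_nonneg n
  have e : (fun r => (t-r)^(α-1) * gf α n r)
      = fun r => ((Kal α * sig n) * ((t-r)^(α-1) * atom α (r - c1 n))
          - (Kal α * sig n) * ((t-r)^(α-1) * atom α (r - c2 n)))
        - ((Kal α * sig (n+1)) * ((t-r)^(α-1) * atom α (r - c3 n))
          - (Kal α * sig (n+1)) * ((t-r)^(α-1) * atom α (r - c4 n))) := by
    funext r; unfold gf; ring
  rw [e]
  have I1 := katom hα0 hα1 t (c1 n) 0 t
  have I2 := katom hα0 hα1 t (c2 n) 0 t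
  have I3 := katom hα0 hα1 t (c3 n) 0 t
  have I4 := katom hα0 hα1 t (c4 n) 0 t
  rw [intervalIntegral.integral_sub ((I1.const_mul _).sub (I2.const_mul _))
    ((I3.const_mul _).sub (I4.const_mul _)),
    intervalIntegral.integral_sub (I1.const_mul _) (I2.const_mul _),
    intervalIntegral.integral_sub (I3.const_mul _) (I4.const_mul _),
    intervalIntegral.integral_const_mul, intervalIntegral.integral_const_mul,
    intervalIntegral.integral_const_mul, intervalIntegral.integral_const_mul,
    ilem hα0 hα1 k1 ht, ilem hα0 hα1 k2 ht, ilem hα0 hα1 k3 ht, ilem hα0 hα1 k4 ht]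
  have hb : Kal α * Bal α = Real.Gamma α := by
    rw [Kal, div_mul_cancel₀ _ (ne_of_gt (balPos hα0 hα1))]
  unfold w
  linear_combination (sig n * pos (t - c1 n) - sig n * pos (t - c2 n)
    - sig (n+1) * pos (t - c3 n) + sig (n+1) * pos (t - c4 n)) * hb




lemma exists_riesz_seq (X : Type*) [NormedAddCommGroup X] [NormedSpace ℝ X]
    (hX : ¬ FiniteDimensional ℝ X) :
    ∃ e : ℕ → X, ∀ n, ‖e n‖ = 1 ∧
      ∀ y ∈ Submodule.span ℝ (e '' Set.Iio n), (1:ℝ)/2 ≤ ‖e n - y‖ := by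
  have hnext : ∀ (s : Set X), s.Finite →
      ∃ z : X, ‖z‖ = 1 ∧ ∀ y ∈ Submodule.span ℝ s, (1:ℝ)/2 ≤ ‖z - y‖ := by
    intro s hs
    haveI hfd : FiniteDimensional ℝ (Submodule.span ℝ s) := FiniteDimensional.span_of_finite ℝ hs
    have hcl : IsClosed (Submodule.span ℝ s : Set X) :=
      Submodule.closed_of_finiteDimensional _
    have hex : ∃ x : X, x ∉ Submodule.span ℝ s := by
      by_contra h
      push_neg at h
      have htop : Submodule.span ℝ s = ⊤ := Submodule.eq_top_iff'.mpr h
      apply hX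
      haveI : FiniteDimensional ℝ (⊤ : Submodule ℝ X) := htop ▸ hfd
      exact (Submodule.topEquiv (R := ℝ) (M := X)).finiteDimensional
    obtain ⟨x₀, hx₀, hbd⟩ := riesz_lemma hcl hex (show (1:ℝ)/2 < 1 by norm_num)
    have hx0 : x₀ ≠ 0 := fun h => hx₀ (h ▸ (Submodule.span ℝ s).zero_mem)
    have hn : 0 < ‖x₀‖ := norm_pos_iff.mpr hx0
    refine ⟨‖x₀‖⁻¹ • x₀, ?_, ?_⟩
    · rw [norm_smul, norm_inv, norm_norm, inv_mul_cancel₀ (ne_of_gt hn)]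
    · intro y hy
      have h1 : ‖x₀‖ • y ∈ Submodule.span ℝ s := Submodule.smul_mem _ _ hy
      have h2 := hbd _ h1
      have e : ‖x₀‖⁻¹ • x₀ - y = ‖x₀‖⁻¹ • (x₀ - ‖x₀‖ • y) := by
        rw [smul_sub, smul_smul, inv_mul_cancel₀ (ne_of_gt hn), one_smul]
      rw [e, norm_smul, norm_inv, norm_norm]
      calc (1:ℝ)/2 = ‖x₀‖⁻¹ * (1/2 * ‖x₀‖) := by field_simp
        _ ≤ ‖x₀‖⁻¹ * ‖x₀ - ‖x₀‖ • y‖ :=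
            mul_le_mul_of_nonneg_left h2 (by positivity)
  let d : (n : ℕ) → Fin n → X := fun n => Nat.rec (motive := fun n => Fin n → X)
    (fun i => i.elim0)
    (fun _ prev => Fin.snoc prev
      (Classical.choose (hnext (Set.range prev) (Set.finite_range prev)))) n
  have hd : ∀ m, d (m+1) = Fin.snoc (d m)
      (Classical.choose (hnext (Set.range (d m)) (Set.finite_range (d m)))) := fun m => rfl
  have hlast : ∀ m, d (m+1) (Fin.last m)
      = Classical.choose (hnext (Set.range (d m)) (Set.finite_range (d m))) := by
    intro m; rw [hd m]; exact Fin.snoc_last _ _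
  have hcast : ∀ m (i : Fin m), d (m+1) i.castSucc = d m i := by
    intro m i; rw [hd m]; exact Fin.snoc_castSucc _ _ _
  have hcompat : ∀ (k m : ℕ) (h : m < k), d k ⟨m, h⟩ = d (m+1) (Fin.last m) := by
    intro k
    induction k with
    | zero => intro m h; omega
    | succ k ih =>
      intro m h
      rcases Nat.lt_succ_iff_lt_or_eq.mp h with h' | h'
      · have hh : (⟨m, h⟩ : Fin (k+1)) = (⟨m, h'⟩ : Fin k).castSucc := rfl
        rw [hh, hcast k]; exact ih m h'
      · subst h'; rfl
  refine ⟨fun n => d (n+1) (Fin.last n), ?_⟩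
  intro n
  have hrange : Set.range (d n) = (fun j => d (j+1) (Fin.last j)) '' Set.Iio n := by
    ext x
    constructor
    · rintro ⟨i, rfl⟩
      exact ⟨i.1, i.2, (hcompat n i.1 i.2).symm⟩
    · rintro ⟨j, hj, rfl⟩
      exact ⟨⟨j, hj⟩, hcompat n j hj⟩
  have spec := Classical.choose_spec (hnext (Set.range (d n)) (Set.finite_range (d n)))
  constructor
  · show ‖d (n+1) (Fin.last n)‖ = 1
    rw [hlast n]; exact spec.1
  · intro y hy
    show (1:ℝ)/2 ≤ ‖d (n+1) (Fin.last n) - y‖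
    rw [hlast n]
    exact spec.2 y (by rwa [hrange])



def cut (y : ℝ) : ℝ := max 0 (min 1 (2 - y))

lemma cut_zero : cut 0 = 1 := by unfold cut; norm_num

lemma cut_of_ge {y : ℝ} (h : 2 ≤ y) : cut y = 0 := by
  unfold cut
  exact max_eq_left (le_trans (min_le_right _ _) (by linarith))

lemma cut_cont : Continuous cut := by
  unfold cut
  exact continuous_const.max (continuous_const.min (continuous_const.sub continuous_id))

lemma cutLip (p q : ℝ) : |cut p - cut q| ≤ |p - q| := by
  have aux : ∀ a b : ℝ, cut a - cut b ≤ |a - b| := by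
    intro a b
    unfold cut
    simp only [max_def, min_def]
    split_ifs <;> cases' abs_cases (a - b) with h h <;> linarith
  rw [abs_sub_le_iff]
  exact ⟨aux p q, abs_sub_comm p q ▸ aux q p⟩

lemma exists_aa_gt {t : ℝ} (h : t < 1) : ∃ N, t < aa N := by
  obtain ⟨N, hN⟩ := exists_pow_lt_of_lt_one (show (0:ℝ) < 1 - t by linarith)
    (show (2⁻¹:ℝ) < 1 by norm_num)
  exact ⟨N, by unfold aa; linarith⟩

lemma epoch {t : ℝ} (h1 : aa 1 ≤ t) (h2 : t < 1) : ∃ n, aa (n+1) ≤ t ∧ t < aa (n+2) := by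
  have hex : ∃ m, t < aa m := exists_aa_gt h2
  classical
  have hm₀ : t < aa (Nat.find hex) := Nat.find_spec hex
  have h0 : ¬ t < aa 0 := not_lt.mpr (by rw [aa_zero]; linarith [aa_mono (Nat.zero_le 1), aa_zero])
  have h1' : ¬ t < aa 1 := not_lt.mpr h1
  have hge : 2 ≤ Nat.find hex := by
    by_contra hc
    push_neg at hc
    interval_cases h : (Nat.find hex)
    · exact h0 hm₀
    · exact h1' hm₀
  obtain ⟨k, hk⟩ := Nat.exists_eq_add_of_le hge
  refine ⟨k, ?_, ?_⟩
  · have := Nat.find_min hex (m := k+1) (by omega)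
    exact not_lt.mp this
  · have : Nat.find hex = k + 2 := by omega
    rwa [this] at hm₀


section Construction

variable {X : Type*} [NormedAddCommGroup X] [NormedSpace ℝ X] [CompleteSpace X]

def uu (e : ℕ → X) (t : ℝ) : X := ∑' k, w k t • e k
def Gv (α : ℝ) (e : ℕ → X) (s : ℝ) : X := ∑' k, gf α k s • e k
def ff (α : ℝ) (e : ℕ → X) (s : ℝ) (x : X) : X :=
  if s < 1 then cut (100 * ‖x - uu e s‖) • Gv α e s else 0

variable (e : ℕ → X) {α : ℝ}

lemma u_eq_sum {N : ℕ} {t : ℝ} (ht : t < aa N) :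
    uu e t = ∑ k ∈ Finset.range N, w k t • e k := by
  apply tsum_eq_sum
  intro k hk
  have hk' : N ≤ k := le_of_not_gt (fun h => hk (Finset.mem_range.mpr h))
  rw [w_zero_left (le_of_lt (lt_of_lt_of_le ht (aa_mono hk'))), zero_smul]

lemma Gv_eq_sum (hα1 : α < 1) {N : ℕ} {t : ℝ} (ht : t < aa N) :
    Gv α e t = ∑ k ∈ Finset.range N, gf α k t • e k := by
  apply tsum_eq_sum
  intro k hk
  have hk' : N ≤ k := le_of_not_gt (fun h => hk (Finset.mem_range.mpr h))
  rw [gf_zero_left hα1 (le_of_lt (lt_of_lt_of_le ht (aa_mono hk'))), zero_smul]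

lemma u_pair {n : ℕ} {t : ℝ} (h1 : aa (n+1) ≤ t) (h2 : t ≤ aa (n+2)) :
    uu e t = w n t • e n + w (n+1) t • e (n+1) := by
  have hz : ∀ k, k ∉ ({n, n+1} : Finset ℕ) → w k t • e k = 0 := by
    intro k hk
    simp only [Finset.mem_insert, Finset.mem_singleton] at hk
    push_neg at hk
    rcases lt_or_gt_of_ne hk.1 with h | h
    · have hc : c4 k ≤ aa (n+1) := le_trans (c4_le_a2 k) (aa_mono (by omega))
      rw [w_zero_right (le_trans hc h1), zero_smul]
    · have hc : aa (n+2) ≤ aa k := aa_mono (by omega)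
      rw [w_zero_left (le_trans h2 hc), zero_smul]
  calc uu e t = ∑ k ∈ ({n, n+1} : Finset ℕ), w k t • e k := tsum_eq_sum hz
    _ = w n t • e n + w (n+1) t • e (n+1) := Finset.sum_pair (by omega : n ≠ n+1)

lemma u_zeroth {t : ℝ} (h : t ≤ aa 1) : uu e t = w 0 t • e 0 := by
  have hz : ∀ k, k ∉ ({0} : Finset ℕ) → w k t • e k = 0 := by
    intro k hk
    have h1 : 1 ≤ k := by
      rcases Nat.eq_zero_or_pos k with h' | h'
      · exact absurd (by simp [h']) hk
      · exact h'
    rw [w_zero_left (le_trans h (aa_mono h1)), zero_smul]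
  calc uu e t = ∑ k ∈ ({0} : Finset ℕ), w k t • e k := tsum_eq_sum hz
    _ = w 0 t • e 0 := Finset.sum_singleton _ _

lemma u_zero : uu e 0 = 0 := by
  rw [u_zeroth e (aa_nonneg 1), w_zero_left (le_of_eq aa_zero.symm), zero_smul]

lemma u_norm_le (he1 : ∀ n, ‖e n‖ = 1) {t : ℝ} (h1 : t < 1) : ‖uu e t‖ ≤ 2 := by
  rcases le_or_gt t (aa 1) with h | h
  · rw [u_zeroth e h, norm_smul, Real.norm_eq_abs, he1 0, mul_one]
    have hb := w_bounds 0 t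
    rw [abs_of_nonneg hb.1]
    linarith [hb.2]
  · obtain ⟨n, hn1, hn2⟩ := epoch (le_of_lt h) h1
    rw [u_pair e hn1 (le_of_lt hn2)]
    have hb1 := w_bounds n t
    have hb2 := w_bounds (n+1) t
    calc ‖w n t • e n + w (n+1) t • e (n+1)‖
        ≤ ‖w n t • e n‖ + ‖w (n+1) t • e (n+1)‖ := norm_add_le _ _
      _ ≤ 2 := by
          rw [norm_smul, norm_smul, Real.norm_eq_abs, Real.norm_eq_abs,
            he1 n, he1 (n+1), mul_one, mul_one,
            abs_of_nonneg hb1.1, abs_of_nonneg hb2.1]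
          linarith [hb1.2, hb2.2]

lemma span_sep (he : ∀ n, ‖e n‖ = 1 ∧ ∀ y ∈ Submodule.span ℝ (e '' Set.Iio n), (1:ℝ)/2 ≤ ‖e n - y‖)
    (j : ℕ) {c : ℝ} (hc : 0 < c) {z : X}
    (hz : z ∈ Submodule.span ℝ (e '' Set.Iio j)) : c/2 ≤ ‖c • e j + z‖ := by
  have hmem : -(c⁻¹ • z) ∈ Submodule.span ℝ (e '' Set.Iio j) :=
    neg_mem (Submodule.smul_mem _ _ hz)
  have h := (he j).2 _ hmem
  have e1 : e j - (-(c⁻¹ • z)) = c⁻¹ • (c • e j + z) := by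
    rw [sub_neg_eq_add, smul_add, smul_smul, inv_mul_cancel₀ (ne_of_gt hc), one_smul]
  rw [e1, norm_smul, norm_inv, Real.norm_eq_abs, abs_of_pos hc] at h
  calc c/2 = c * (1/2) := by ring
    _ ≤ c * (c⁻¹ * ‖c • e j + z‖) := mul_le_mul_of_nonneg_left h (le_of_lt hc)
    _ = ‖c • e j + z‖ := by field_simp

lemma SEP (he : ∀ n, ‖e n‖ = 1 ∧ ∀ y ∈ Submodule.span ℝ (e '' Set.Iio n), (1:ℝ)/2 ≤ ‖e n - y‖)
    {n : ℕ} {t : ℝ} (h1 : aa (n+1) ≤ t) (h2 : t ≤ aa (n+2)) {z : X}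
    (hz : z ∈ Submodule.span ℝ (e '' Set.Iio n)) : 1/8 ≤ ‖uu e t - z‖ := by
  rw [u_pair e h1 h2]
  have hb := w_bounds (n+1) t
  rcases le_or_gt (1/4 : ℝ) (w (n+1) t) with h | h
  · have hz' : w n t • e n - z ∈ Submodule.span ℝ (e '' Set.Iio (n+1)) := by
      apply sub_mem
      · exact Submodule.smul_mem _ _ (Submodule.subset_span ⟨n, by simp, rfl⟩)
      · exact Submodule.span_mono (Set.image_mono (Set.Iio_subset_Iio (by omega))) hz
    have hs := span_sep e he (n+1) (show (0:ℝ) < w (n+1) t by linarith) hz'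
    have e1 : w n t • e n + w (n+1) t • e (n+1) - z
        = w (n+1) t • e (n+1) + (w n t • e n - z) := by abel
    rw [e1]
    linarith
  · have hanchor : w n t = 1 := by
      apply w_one (le_trans (c2_le_a1 n) h1)
      by_contra hcon
      push_neg at hcon
      rw [c3_eq] at hcon
      have h1' : w (n+1) t = 1 :=
        w_one (le_of_lt hcon) (le_trans h2 (le_of_lt (a1_lt_c3 (n+1))))
      linarith
    rw [hanchor, one_smul]
    have htri : ‖e n - z‖ ≤ ‖e n + w (n+1) t • e (n+1) - z‖ + ‖w (n+1) t • e (n+1)‖ := by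
      have e2 : e n - z = (e n + w (n+1) t • e (n+1) - z) - w (n+1) t • e (n+1) := by abel
      rw [e2]; exact norm_sub_le _ _
    have h5 : ‖w (n+1) t • e (n+1)‖ ≤ 1/4 := by
      rw [norm_smul, Real.norm_eq_abs, (he (n+1)).1, mul_one, abs_of_nonneg hb.1]
      linarith
    have h6 : (1:ℝ)/2 ≤ ‖e n - z‖ := (he n).2 z hz
    linarith

lemma ESCAPE (he : ∀ n, ‖e n‖ = 1 ∧ ∀ y ∈ Submodule.span ℝ (e '' Set.Iio n), (1:ℝ)/2 ≤ ‖e n - y‖)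
    (x₀ : X) : ∃ N, ∀ s, aa (N+1) ≤ s → s < 1 → 1/25 ≤ ‖x₀ - uu e s‖ := by
  by_contra hc
  push_neg at hc
  obtain ⟨s₁, hs₁a, hs₁b, hs₁c⟩ := hc 0
  obtain ⟨n₁, hn₁a, hn₁b⟩ := epoch hs₁a hs₁b
  obtain ⟨s₂, hs₂a, hs₂b, hs₂c⟩ := hc (n₁ + 2)
  obtain ⟨n₂, hn₂a, hn₂b⟩ := epoch (le_trans (aa_mono (by omega : 1 ≤ n₁+2+1)) hs₂a) hs₂b
  have hlt : n₁ + 2 ≤ n₂ := by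
    by_contra hcc
    push_neg at hcc
    have hmm : aa (n₂+2) ≤ aa (n₁+2+1) := aa_mono (by omega)
    linarith
  have hz : uu e s₁ ∈ Submodule.span ℝ (e '' Set.Iio n₂) := by
    rw [u_pair e hn₁a (le_of_lt hn₁b)]
    exact add_mem
      (Submodule.smul_mem _ _ (Submodule.subset_span
        ⟨n₁, by simp only [Set.mem_Iio]; omega, rfl⟩))
      (Submodule.smul_mem _ _ (Submodule.subset_span
        ⟨n₁+1, by simp only [Set.mem_Iio]; omega, rfl⟩))
  have hsep := SEP e he hn₂a (le_of_lt hn₂b) hz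
  have tri : ‖uu e s₂ - uu e s₁‖ ≤ ‖x₀ - uu e s₂‖ + ‖x₀ - uu e s₁‖ := by
    have e1 : uu e s₂ - uu e s₁ = -(x₀ - uu e s₂) + (x₀ - uu e s₁) := by abel
    rw [e1]
    exact (norm_add_le _ _).trans (by rw [norm_neg])
  linarith

lemma u_contAt {t : ℝ} (ht : t < 1) : ContinuousAt (uu e) t := by
  obtain ⟨N, hN⟩ := exists_aa_gt ht
  have hsum : Continuous (fun s => ∑ k ∈ Finset.range N, w k s • e k) :=
    continuous_finset_sum _ (fun k _ => (w_cont k).smul continuous_const)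
  apply hsum.continuousAt.congr
  exact Filter.eventuallyEq_of_mem (Iio_mem_nhds hN) (fun s hs => (u_eq_sum e hs).symm)

lemma Gv_contAt (hα1 : α < 1) {t : ℝ} (ht : t < 1) : ContinuousAt (Gv α e) t := by
  obtain ⟨N, hN⟩ := exists_aa_gt ht
  have hsum : Continuous (fun s => ∑ k ∈ Finset.range N, gf α k s • e k) :=
    continuous_finset_sum _ (fun k _ => (gf_cont hα1 k).smul continuous_const)
  apply hsum.continuousAt.congr
  exact Filter.eventuallyEq_of_mem (Iio_mem_nhds hN) (fun s hs => (Gv_eq_sum e hα1 hs).symm)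

lemma ff_eval_on_traj (t : ℝ) (ht : t < 1) : ff α e t (uu e t) = Gv α e t := by
  rw [ff, if_pos ht, sub_self, norm_zero, mul_zero, cut_zero, one_smul]

lemma ff_far {x₀ : X} {N : ℕ} (hN : ∀ s, aa (N+1) ≤ s → s < 1 → 1/25 ≤ ‖x₀ - uu e s‖)
    {s : ℝ} {x : X} (hs : aa (N+1) ≤ s) (hx : ‖x - x₀‖ < 1/100) : ff α e s x = 0 := by
  rw [ff]
  split_ifs with h
  · have h1 := hN s hs h
    have h2 : (3:ℝ)/100 ≤ ‖x - uu e s‖ := by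
      have e1 : x₀ - uu e s = (x₀ - x) + (x - uu e s) := by abel
      have tri : ‖x₀ - uu e s‖ ≤ ‖x₀ - x‖ + ‖x - uu e s‖ := by
        rw [e1]; exact norm_add_le _ _
      have e2 : ‖x₀ - x‖ = ‖x - x₀‖ := norm_sub_rev x₀ x
      linarith
    rw [cut_of_ge (by linarith : (2:ℝ) ≤ 100 * ‖x - uu e s‖), zero_smul]
  · rfl

lemma volterra (hα0 : 0 < α) (hα1 : α < 1) {s₀ : ℝ} (h0 : 0 ≤ s₀) (h1 : s₀ < 1) :
    uu e s₀ = (1 / Real.Gamma α) • ∫ r in (0:ℝ)..s₀, ((s₀ - r) ^ (α-1)) • ff α e r (uu e r) := by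
  obtain ⟨N, hN⟩ := exists_aa_gt h1
  have hΓ : Real.Gamma α ≠ 0 := ne_of_gt (Real.Gamma_pos_of_pos hα0)
  have hint : ∀ k ∈ Finset.range N, IntervalIntegrable
      (fun r => ((s₀ - r)^(α-1) * gf α k r) • e k) volume 0 s₀ :=
    fun k _ => by
      have hk := kgf hα0 hα1 k s₀ 0 s₀
      exact ⟨hk.1.smul_const (e k), hk.2.smul_const (e k)⟩
  have hcong : (∫ r in (0:ℝ)..s₀, ((s₀ - r) ^ (α-1)) • ff α e r (uu e r))
      = ∫ r in (0:ℝ)..s₀, ∑ k ∈ Finset.range N, ((s₀ - r)^(α-1) * gf α k r) • e k := by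
    apply intervalIntegral.integral_congr
    intro r hr
    rw [uIcc_of_le h0] at hr
    dsimp only
    rw [ff_eval_on_traj e r (lt_of_le_of_lt hr.2 h1),
      Gv_eq_sum e hα1 (lt_of_le_of_lt hr.2 hN), Finset.smul_sum]
    exact Finset.sum_congr rfl (fun k _ => smul_smul _ _ _)
  rw [hcong, intervalIntegral.integral_finset_sum hint]
  have heval : ∀ k ∈ Finset.range N,
      (∫ r in (0:ℝ)..s₀, ((s₀ - r)^(α-1) * gf α k r) • e k) = (Real.Gamma α * w k s₀) • e k := by
    intro k _
    rw [intervalIntegral.integral_smul_const, gf_int hα0 hα1 k h0]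
  rw [Finset.sum_congr rfl heval, Finset.smul_sum, u_eq_sum e hN]
  apply Finset.sum_congr rfl
  intro k _
  rw [smul_smul]
  congr 1
  field_simp

lemma c2_lt_a1 (n : ℕ) : c2 n < aa (n+1) := by
  unfold c2
  rw [aa_succ]
  linarith [qmono_lt (show n+1 < n+3 by omega)]

lemma gf_at_c2 (hα1 : α < 1) (n : ℕ) :
    gf α n (c2 n) = Kal α * (sig n * ((2⁻¹:ℝ)^(n+3))^(1-α)) := by
  have o2 := c2_le_a1 n
  have o3 := a1_lt_c3 n
  have o4 := c3_lt_c4 n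
  unfold gf
  rw [atom_of_nonpos hα1 (by linarith : c2 n - c2 n ≤ 0),
    atom_of_nonpos hα1 (by linarith : c2 n - c3 n ≤ 0),
    atom_of_nonpos hα1 (by linarith : c2 n - c4 n ≤ 0)]
  rw [show atom α (c2 n - c1 n) = ((2⁻¹:ℝ)^(n+3))^(1-α) by
    rw [atom, c2_sub_c1, pos_of_nonneg (le_of_lt (qpos (n+3)))]]
  ring

lemma sig_rpow_eq (hα1 : α < 1) (n : ℕ) :
    sig n * ((2⁻¹:ℝ)^(n+3))^(1-α) = ((2:ℝ)^α) ^ (n+3) := by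
  have hb : (0:ℝ) < (2:ℝ)^(n+3) := by positivity
  have e0 : ((2⁻¹:ℝ)^(n+3)) = ((2:ℝ)^(n+3))⁻¹ := by rw [inv_pow]
  rw [e0, Real.inv_rpow (le_of_lt hb)]
  rw [show sig n = (2:ℝ)^(n+3) from rfl]
  rw [← Real.rpow_natCast (2:ℝ) (n+3)]
  rw [← Real.rpow_mul (by norm_num : (0:ℝ) ≤ 2)]
  rw [← Real.rpow_neg (by norm_num : (0:ℝ) ≤ 2) ((((n+3):ℕ):ℝ) * (1-α))]
  rw [← Real.rpow_add (by norm_num : (0:ℝ) < 2)]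
  rw [← Real.rpow_natCast ((2:ℝ)^α) (n+3), ← Real.rpow_mul (by norm_num : (0:ℝ) ≤ 2)]
  congr 1
  push_cast
  ring

lemma Gv_low (he : ∀ n, ‖e n‖ = 1 ∧ ∀ y ∈ Submodule.span ℝ (e '' Set.Iio n), (1:ℝ)/2 ≤ ‖e n - y‖)
    (hα0 : 0 < α) (hα1 : α < 1) (n : ℕ) :
    Kal α * (((2:ℝ)^α) ^ (n+3)) / 2 ≤ ‖Gv α e (c2 n)‖ := by
  rw [Gv_eq_sum e hα1 (c2_lt_a1 n), Finset.sum_range_succ]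
  have hz : (∑ k ∈ Finset.range n, gf α k (c2 n) • e k) ∈ Submodule.span ℝ (e '' Set.Iio n) :=
    Submodule.sum_mem _ (fun k hk => Submodule.smul_mem _ _
      (Submodule.subset_span ⟨k, Set.mem_Iio.mpr (Finset.mem_range.mp hk), rfl⟩))
  have hval : gf α n (c2 n) = Kal α * (((2:ℝ)^α) ^ (n+3)) := by
    rw [gf_at_c2 hα1 n, sig_rpow_eq hα1 n]
  have hpos : 0 < gf α n (c2 n) := by
    rw [hval]
    have := kal_pos hα0 hα1
    positivity
  have hs := span_sep e he n hpos hz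
  rw [add_comm] at hs
  rw [hval] at hs
  rw [hval]
  exact hs

lemma growth (hα0 : 0 < α) (hα1 : α < 1) (C : ℝ) :
    ∃ n : ℕ, C < Kal α * (((2:ℝ)^α) ^ (n+3)) / 2 := by
  set y := (2:ℝ)^α with hy
  have hy1 : 1 < y := by
    rw [hy]
    exact (Real.one_lt_rpow_iff_of_pos (by norm_num)).mpr (Or.inl ⟨one_lt_two, hα0⟩)
  have hK := kal_pos hα0 hα1
  obtain ⟨m, hm⟩ := pow_unbounded_of_one_lt (2*C/(Kal α)) hy1
  refine ⟨m, ?_⟩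
  have h1 : y ^ m ≤ y ^ (m+3) := pow_le_pow_right₀ (le_of_lt hy1) (by omega)
  have h2 : 2*C < Kal α * y ^ m := by
    rw [div_lt_iff₀ hK] at hm
    linarith
  nlinarith

lemma u_at_a (n : ℕ) : uu e (aa (n+1)) = e n := by
  rw [u_pair e (le_refl (aa (n+1))) (aa_mono (by omega))]
  rw [w_one (c2_le_a1 n) (le_of_lt (a1_lt_c3 n)), w_zero_left (le_refl (aa (n+1)))]
  simp

end Construction

end
end AbsBlow

open Topology in
open AbsBlow in
/-- For `α ∈ (0,1)` and `X` an infinite-dimensional real Banach space, there exist an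
initial value `u₀`, a continuous locally Lipschitz `f : [0,∞) × X → X` which does not map
every bounded set into a bounded set, and a bounded continuous maximal local solution
`u : [0,1) → X` of the fractional Cauchy problem (in Volterra integral form) which admits
no continuous extension to `[0,1]`. -/
theorem absence_of_blow_up_counterexample
    (α : ℝ) (hα : α ∈ Set.Ioo (0 : ℝ) 1)
    (X : Type*) [NormedAddCommGroup X] [NormedSpace ℝ X] [CompleteSpace X]
    (hX : ¬ FiniteDimensional ℝ X) :
    ∃ (u₀ : X) (f : ℝ → X → X) (u : ℝ → X),
      -- f is continuous on [0,∞) × X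
      ContinuousOn (fun p : ℝ × X => f p.1 p.2) (Set.Ici 0 ×ˢ Set.univ) ∧
      -- f is locally Lipschitz (in the second variable, locally in both)
      (∀ t₀ ∈ Set.Ici (0 : ℝ), ∀ x₀ : X, ∃ L > (0 : ℝ), ∃ r > (0 : ℝ),
        ∀ (s : ℝ) (x y : X), s ∈ Set.Ici (0 : ℝ) →
          dist (s, x) (t₀, x₀) < r → dist (s, y) (t₀, x₀) < r →
          ‖f s x - f s y‖ ≤ L * ‖x - y‖) ∧
      -- f does not map every bounded subset of [0,∞) × X into a bounded subset of X
      (∃ S : Set (ℝ × X), S ⊆ Set.Ici 0 ×ˢ Set.univ ∧ Bornology.IsBounded S ∧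
        ¬ Bornology.IsBounded ((fun p : ℝ × X => f p.1 p.2) '' S)) ∧
      -- u is a bounded continuous function on [0,1) with u(0) = u₀
      ContinuousOn u (Set.Ico 0 1) ∧
      Bornology.IsBounded (u '' Set.Ico 0 1) ∧
      u 0 = u₀ ∧
      -- u solves the Volterra integral equation on [0,1)
      (∀ s ∈ Set.Ico (0 : ℝ) 1,
        u s = u₀ + (1 / Real.Gamma α) •
          ∫ r in (0 : ℝ)..s, ((s - r) ^ (α - 1)) • f r (u r)) ∧
      -- u admits no continuous extension to [0,1]
      ¬ ∃ v : ℝ → X, ContinuousOn v (Set.Icc 0 1) ∧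
        ∀ s ∈ Set.Ico (0 : ℝ) 1, v s = u s := by
  obtain ⟨e, he⟩ := exists_riesz_seq X hX
  obtain ⟨hα0, hα1⟩ := hα
  refine ⟨0, ff α e, uu e, ?_, ?_, ?_, ?_, ?_, ?_, ?_, ?_⟩
  · -- continuity of f
    intro p hp
    rcases lt_or_ge p.1 1 with h | h
    · obtain ⟨N, hN⟩ := exists_aa_gt h
      have haN1 : aa N < 1 := aa_lt_one N
      have hg : Continuous (fun q : ℝ × X =>
          cut (100 * ‖q.2 - (∑ k ∈ Finset.range N, w k q.1 • e k)‖) •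
            (∑ k ∈ Finset.range N, gf α k q.1 • e k)) := by
        apply Continuous.smul
        · exact cut_cont.comp (continuous_const.mul ((continuous_snd.sub
            ((continuous_finset_sum _ (fun k _ => (w_cont k).smul continuous_const)).comp
              continuous_fst)).norm))
        · exact (continuous_finset_sum _
            (fun k _ => (gf_cont hα1 k).smul continuous_const)).comp continuous_fst
      have hopen : IsOpen (Set.Iio (aa N) ×ˢ (Set.univ : Set X)) := isOpen_Iio.prod isOpen_univ
      have hmem : (Set.Iio (aa N) ×ˢ (Set.univ : Set X)) ∈ 𝓝 p :=
        hopen.mem_nhds ⟨hN, Set.mem_univ _⟩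
      apply ContinuousAt.continuousWithinAt
      apply hg.continuousAt.congr
      apply Filter.eventuallyEq_of_mem hmem
      rintro ⟨s, x⟩ ⟨hs, -⟩
      simp only [Set.mem_Iio] at hs
      exact (by rw [ff, if_pos (lt_trans hs haN1), u_eq_sum e hs, Gv_eq_sum e hα1 hs] :
        ff α e s x = cut (100 * ‖x - ∑ k ∈ Finset.range N, w k s • e k‖) •
          ∑ k ∈ Finset.range N, gf α k s • e k).symm
    · obtain ⟨N, hN⟩ := ESCAPE e he p.2
      have hopen : IsOpen (Set.Ioi (aa (N+1)) ×ˢ Metric.ball p.2 (1/100)) :=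
        isOpen_Ioi.prod Metric.isOpen_ball
      have hmem : (Set.Ioi (aa (N+1)) ×ˢ Metric.ball p.2 (1/100)) ∈ 𝓝 p :=
        hopen.mem_nhds ⟨lt_of_lt_of_le (aa_lt_one _) h, Metric.mem_ball_self (by norm_num)⟩
      apply ContinuousAt.continuousWithinAt
      apply (continuousAt_const (y := (0:X))).congr
      apply Filter.eventuallyEq_of_mem hmem
      rintro ⟨s, x⟩ ⟨hs, hx⟩
      exact (ff_far e hN (le_of_lt hs) (by rw [← dist_eq_norm]; exact hx)).symm
  · -- local Lipschitz
    intro t₀ _ x₀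
    rcases lt_or_ge t₀ 1 with h | h
    · obtain ⟨N, hN⟩ := exists_aa_gt h
      have hc : ContinuousOn (Gv α e) (Set.Icc 0 (aa N)) := fun s hs =>
        (Gv_contAt e hα1 (lt_of_le_of_lt hs.2 (aa_lt_one N))).continuousWithinAt
      obtain ⟨C, hC⟩ := (isCompact_Icc).exists_bound_of_continuousOn hc
      have hC0 : 0 ≤ C := le_trans (norm_nonneg _) (hC 0 ⟨le_refl 0, aa_nonneg N⟩)
      refine ⟨100*C + 1, by positivity, aa N - t₀, by linarith, ?_⟩
      intro s x y hs hdx hdy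
      have hs1 : s < aa N := by
        have h1 : dist s t₀ < aa N - t₀ :=
          lt_of_le_of_lt (by rw [Prod.dist_eq]; exact le_max_left _ _) hdx
        have h2 := abs_lt.mp (by rwa [Real.dist_eq] at h1)
        linarith [h2.2]
      have hlt1 : s < 1 := lt_trans hs1 (aa_lt_one N)
      simp only [ff, if_pos hlt1]
      rw [← sub_smul, norm_smul]
      have hcut := cutLip (100 * ‖x - uu e s‖) (100 * ‖y - uu e s‖)
      have hnrm := abs_norm_sub_norm_le (x - uu e s) (y - uu e s)
      rw [sub_sub_sub_cancel_right] at hnrm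
      have hnn : |100 * ‖x - uu e s‖ - 100 * ‖y - uu e s‖| ≤ 100 * ‖x - y‖ := by
        rw [← mul_sub, abs_mul, abs_of_pos (by norm_num : (0:ℝ) < 100)]
        exact mul_le_mul_of_nonneg_left hnrm (by norm_num)
      have hGv : ‖Gv α e s‖ ≤ C := hC s ⟨hs, le_of_lt hs1⟩
      calc ‖cut (100 * ‖x - uu e s‖) - cut (100 * ‖y - uu e s‖)‖ * ‖Gv α e s‖
          ≤ (100 * ‖x - y‖) * C := by
            apply mul_le_mul _ hGv (norm_nonneg _) (by positivity)
            rw [Real.norm_eq_abs]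
            exact le_trans hcut hnn
        _ ≤ (100*C + 1) * ‖x - y‖ := by nlinarith [norm_nonneg (x - y)]
    · obtain ⟨N, hN⟩ := ESCAPE e he x₀
      have haN : aa (N+1) < 1 := aa_lt_one _
      refine ⟨1, one_pos, min (t₀ - aa (N+1)) (1/100),
        lt_min (by linarith) (by norm_num), ?_⟩
      intro s x y hs hdx hdy
      have hsx : aa (N+1) ≤ s := by
        have h1 : dist s t₀ < t₀ - aa (N+1) :=
          lt_of_le_of_lt (by rw [Prod.dist_eq]; exact le_max_left _ _)
            (lt_of_lt_of_le hdx (min_le_left _ _))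
        have h2 := abs_lt.mp (by rwa [Real.dist_eq] at h1)
        linarith [h2.1]
      have hxx : ‖x - x₀‖ < 1/100 := by
        have h1 : dist x x₀ < 1/100 :=
          lt_of_le_of_lt (by rw [Prod.dist_eq]; exact le_max_right _ _)
            (lt_of_lt_of_le hdx (min_le_right _ _))
        rwa [dist_eq_norm] at h1
      have hyy : ‖y - x₀‖ < 1/100 := by
        have h1 : dist y x₀ < 1/100 :=
          lt_of_le_of_lt (by rw [Prod.dist_eq]; exact le_max_right _ _)
            (lt_of_lt_of_le hdy (min_le_right _ _))
        rwa [dist_eq_norm] at h1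
      rw [ff_far e hN hsx hxx, ff_far e hN hsx hyy, sub_zero, norm_zero, one_mul]
      exact norm_nonneg _
  · -- unbounded image of a bounded set
    refine ⟨(fun s => (s, uu e s)) '' Set.Ico 0 1, ?_, ?_, ?_⟩
    · rintro _ ⟨s, hs, rfl⟩
      exact ⟨hs.1, Set.mem_univ _⟩
    · apply Bornology.IsBounded.subset
        ((Metric.isBounded_Icc (0:ℝ) 1).prod (Metric.isBounded_closedBall (x := (0:X)) (r := 2)))
      rintro _ ⟨s, hs, rfl⟩
      exact ⟨⟨hs.1, le_of_lt hs.2⟩, Metric.mem_closedBall.mpr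
        (by rw [dist_zero_right]; exact u_norm_le e (fun n => (he n).1) hs.2)⟩
    · intro hB
      obtain ⟨C, hC⟩ := hB.exists_norm_le
      obtain ⟨n, hn⟩ := growth (α := α) hα0 hα1 C
      have hc2 : c2 n ∈ Set.Ico (0:ℝ) 1 :=
        ⟨(knot_nonneg n).2.1, lt_trans (c2_lt_a1 n) (aa_lt_one _)⟩
      have hmem : ((c2 n, uu e (c2 n)) : ℝ × X) ∈ (fun s => (s, uu e s)) '' Set.Ico 0 1 :=
        ⟨c2 n, hc2, rfl⟩
      have hval := hC _ (Set.mem_image_of_mem (fun p : ℝ × X => ff α e p.1 p.2) hmem)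
      have heq : (fun p : ℝ × X => ff α e p.1 p.2) ((c2 n, uu e (c2 n)) : ℝ × X)
          = Gv α e (c2 n) := ff_eval_on_traj e (c2 n) hc2.2
      rw [show ‖ff α e (c2 n, uu e (c2 n)).1 (c2 n, uu e (c2 n)).2‖ = ‖Gv α e (c2 n)‖ from congrArg norm heq] at hval
      have hlow := Gv_low e he hα0 hα1 n
      linarith
  · exact fun t ht => (u_contAt e ht.2).continuousWithinAt
  · apply Bornology.IsBounded.subset (Metric.isBounded_closedBall (x := (0:X)) (r := 2))
    rintro _ ⟨s, hs, rfl⟩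
    exact Metric.mem_closedBall.mpr
      (by rw [dist_zero_right]; exact u_norm_le e (fun n => (he n).1) hs.2)
  · exact u_zero e
  · intro s hs
    rw [zero_add]
    exact volterra e hα0 hα1 hs.1 hs.2
  · rintro ⟨v, hv, hagree⟩
    have hconv : Filter.Tendsto (fun n : ℕ => aa (n+1)) Filter.atTop (𝓝 1) := by
      have h2 : Filter.Tendsto (fun n : ℕ => (2⁻¹:ℝ)^(n+1)) Filter.atTop (𝓝 0) :=
        (tendsto_pow_atTop_nhds_zero_of_lt_one (by norm_num) (by norm_num)).comp
          (Filter.tendsto_add_atTop_nat 1)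
      have h3 := (tendsto_const_nhds (x := (1:ℝ)) (f := Filter.atTop (α := ℕ))).sub h2
      simpa [aa] using h3
    have hvc : ContinuousWithinAt v (Set.Icc 0 1) 1 := hv 1 (by norm_num)
    have htend : Filter.Tendsto (fun n : ℕ => v (aa (n+1))) Filter.atTop (𝓝 (v 1)) :=
      hvc.tendsto.comp (tendsto_nhdsWithin_of_tendsto_nhds_of_eventually_within _ hconv
        (Filter.Eventually.of_forall (fun n => ⟨aa_nonneg _, le_of_lt (aa_lt_one _)⟩)))
    have hev : (fun n : ℕ => v (aa (n+1))) = fun n : ℕ => e n := by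
      funext n
      rw [hagree _ ⟨aa_nonneg _, aa_lt_one _⟩, u_at_a e n]
    rw [hev] at htend
    have hdiff : Filter.Tendsto (fun n : ℕ => e (n+1) - e n) Filter.atTop (𝓝 0) := by
      have h4 := (htend.comp (Filter.tendsto_add_atTop_nat 1)).sub htend
      simpa using h4
    have hlb : ∀ n : ℕ, (1:ℝ)/2 ≤ ‖e (n+1) - e n‖ := fun n =>
      (he (n+1)).2 (e n) (Submodule.subset_span ⟨n, Set.mem_Iio.mpr (by omega), rfl⟩)
    have hsmall := (hdiff.norm).eventually_lt tendsto_const_nhds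
      (by rw [norm_zero]; norm_num : ‖(0:X)‖ < 1/2)
    obtain ⟨n, hn⟩ := hsmall.exists
    linarith [hlb n]
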